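/- arXiv:2507.14940 — 2 statements merged into one kernel-verified Lean document; each statement's English description precedes it below -/
import Mathlib

section
/- Let m, n be positive integers, let r ≤ s ≤ min(m,n), let A be a complex m×n matrix of rank r with singular values σ_1 ≥ … ≥ σ_r > 0, and let Ã be a complex m×n matrix of rank s with singular values σ̃_1 ≥ … ≥ σ̃_s > 0. Set H = (AᴴA)^{1/2}, H̃ = (ÃᴴÃ)^{1/2}, F = Σ_{j=1}^r σ_j² + Σ_{j=1}^s σ̃_j², and G = Σ_{j=1}^r σ_j σ̃_j. Then ‖A + Ã‖_F ≥ sqrt( (F − 2G) / (F + 2G) ) · ‖H + H̃‖_F. -/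
open scoped BigOperators Matrix ComplexOrder

noncomputable def frob {m n : ℕ} (A : Matrix (Fin m) (Fin n) ℂ) : ℝ :=
  Real.sqrt (∑ i, ∑ j, ‖A i j‖ ^ 2)

noncomputable def absMat {m n : ℕ} (A : Matrix (Fin m) (Fin n) ℂ) :
    Matrix (Fin n) (Fin n) ℂ :=
  (Matrix.posSemidef_conjTranspose_mul_self A).1.eigenvectorUnitary.1 *
    Matrix.diagonal ((↑) ∘ (Real.sqrt ·) ∘ (Matrix.posSemidef_conjTranspose_mul_self A).1.eigenvalues) *
    (star (Matrix.posSemidef_conjTranspose_mul_self A).1.eigenvectorUnitary : Matrix (Fin n) (Fin n) ℂ)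

noncomputable def svdMat (m n r : ℕ) (σ : ℕ → ℝ) : Matrix (Fin m) (Fin n) ℂ :=
  Matrix.of fun i j =>
    if (i : ℕ) = (j : ℕ) ∧ (i : ℕ) < r then ((σ ((i : ℕ) + 1) : ℝ) : ℂ) else 0

/-- `A` admits a singular value decomposition with singular values
`σ 1, …, σ r` (indexed from 1) on the diagonal. -/
def HasSVD {m n : ℕ} (A : Matrix (Fin m) (Fin n) ℂ) (r : ℕ) (σ : ℕ → ℝ) : Prop :=
  ∃ (U : Matrix (Fin m) (Fin m) ℂ) (V : Matrix (Fin n) (Fin n) ℂ),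
    Uᴴ * U = 1 ∧ U * Uᴴ = 1 ∧ Vᴴ * V = 1 ∧ V * Vᴴ = 1 ∧
    A = U * svdMat m n r σ * Vᴴ

/-- `σ 1 ≥ σ 2 ≥ … ≥ σ r > 0`. -/
def SingVals (r : ℕ) (σ : ℕ → ℝ) : Prop :=
  (∀ j, 1 ≤ j → j ≤ r → 0 < σ j) ∧ ∀ j, 1 ≤ j → j < r → σ (j + 1) ≤ σ j

/-- Generalized polar decomposition: `A = Q * |A|`, where `Q` is a rank-`r` partial
isometry such that the column space of `Qᴴ` equals the column space of `|A|`. -/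
def IsPolar {m n : ℕ} (A Q : Matrix (Fin m) (Fin n) ℂ) (r : ℕ) : Prop :=
  A = Q * absMat A ∧ Q * Qᴴ * Q = Q ∧ Q.rank = r ∧
    LinearMap.range (Matrix.mulVecLin Qᴴ) =
      LinearMap.range (Matrix.mulVecLin (absMat A))

namespace StrongLee

open Finset

/-! ### Rearrangement machinery -/

lemma sum_indicator_Ico (s k : ℕ) (f : ℕ → ℝ) :
    ∑ t ∈ Finset.range s, (if k ≤ t then f t else 0) = ∑ t ∈ Finset.Ico k s, f t := by
  rw [Finset.sum_ite, Finset.sum_const_zero, add_zero]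
  congr 1
  ext t; simp [Finset.mem_Ico]; omega

lemma sum_indicator_le (r u : ℕ) (hu : u < r) (g : ℕ → ℝ) :
    ∑ i ∈ Finset.range r, (if i ≤ u then g i else 0) = ∑ i ∈ Finset.range (u+1), g i := by
  rw [Finset.sum_ite, Finset.sum_const_zero, add_zero]
  congr 1
  ext i; simp; omega

lemma telescope (μ : ℕ → ℝ) (k s : ℕ) (hk : k ≤ s) :
    ∑ t ∈ Finset.Ico k s, (μ t - μ (t+1)) = μ k - μ s := by
  rw [Finset.sum_Ico_eq_sub _ hk, Finset.sum_range_sub' μ, Finset.sum_range_sub' μ]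
  ring

lemma sum_swap3 {M : Type*} [AddCommMonoid M] (R S T : Finset ℕ) (f : ℕ → ℕ → ℕ → M) :
    ∑ i ∈ R, ∑ t ∈ S, ∑ u ∈ T, f i t u = ∑ t ∈ S, ∑ u ∈ T, ∑ i ∈ R, f i t u := by
  rw [Finset.sum_comm]
  exact Finset.sum_congr rfl fun t _ => Finset.sum_comm

lemma sum_swap4 {M : Type*} [AddCommMonoid M] (S R : Finset ℕ) (f : ℕ → ℕ → ℕ → ℕ → M) :
    ∑ k ∈ S, ∑ i ∈ R, ∑ t ∈ S, ∑ u ∈ R, f k i t u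
      = ∑ t ∈ S, ∑ u ∈ R, ∑ k ∈ S, ∑ i ∈ R, f k i t u := by
  calc ∑ k ∈ S, ∑ i ∈ R, ∑ t ∈ S, ∑ u ∈ R, f k i t u
      = ∑ k ∈ S, ∑ t ∈ S, ∑ i ∈ R, ∑ u ∈ R, f k i t u :=
        Finset.sum_congr rfl fun k _ => Finset.sum_comm
    _ = ∑ t ∈ S, ∑ k ∈ S, ∑ i ∈ R, ∑ u ∈ R, f k i t u := Finset.sum_comm
    _ = ∑ t ∈ S, ∑ k ∈ S, ∑ u ∈ R, ∑ i ∈ R, f k i t u :=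
        Finset.sum_congr rfl fun t _ => Finset.sum_congr rfl fun k _ => Finset.sum_comm
    _ = ∑ t ∈ S, ∑ u ∈ R, ∑ k ∈ S, ∑ i ∈ R, f k i t u :=
        Finset.sum_congr rfl fun t _ => Finset.sum_comm

lemma key_rearrange (r s : ℕ) (hrs : r ≤ s) (μ ν : ℕ → ℝ)
    (hμs : μ s = 0) (hνr : ν r = 0)
    (hμa : ∀ t, t < s → μ (t+1) ≤ μ t) (hνa : ∀ t, t < r → ν (t+1) ≤ ν t)
    (d : ℕ → ℕ → ℝ) (hd0 : ∀ k i, 0 ≤ d k i)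
    (hrow : ∀ k, k < s → ∑ i ∈ Finset.range r, d k i ≤ 1)
    (hcol : ∀ i, i < r → ∑ k ∈ Finset.range s, d k i ≤ 1) :
    ∑ k ∈ Finset.range s, ∑ i ∈ Finset.range r, μ k * ν i * d k i
      ≤ ∑ i ∈ Finset.range r, μ i * ν i := by
  set δμ : ℕ → ℝ := fun t => μ t - μ (t+1) with hδμ
  set δν : ℕ → ℝ := fun u => ν u - ν (u+1) with hδν
  have hμk : ∀ k, k ≤ s → μ k = ∑ t ∈ Finset.range s, (if k ≤ t then δμ t else 0) := by
    intro k hk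
    rw [sum_indicator_Ico, telescope μ k s hk, hμs, sub_zero]
  have hνk : ∀ i, i ≤ r → ν i = ∑ u ∈ Finset.range r, (if i ≤ u then δν u else 0) := by
    intro i hi
    rw [sum_indicator_Ico, telescope ν i r hi, hνr, sub_zero]
  have hδμ0 : ∀ t, t < s → 0 ≤ δμ t := fun t ht => sub_nonneg.mpr (hμa t ht)
  have hδν0 : ∀ u, u < r → 0 ≤ δν u := fun u hu => sub_nonneg.mpr (hνa u hu)
  calc ∑ k ∈ Finset.range s, ∑ i ∈ Finset.range r, μ k * ν i * d k i
      = ∑ k ∈ Finset.range s, ∑ i ∈ Finset.range r, ∑ t ∈ Finset.range s, ∑ u ∈ Finset.range r,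
          ((if k ≤ t then δμ t else 0) * ((if i ≤ u then δν u else 0) * d k i)) := by
        refine Finset.sum_congr rfl fun k hk => Finset.sum_congr rfl fun i hi => ?_
        rw [hμk k (le_of_lt (mem_range.mp hk)), hνk i (le_of_lt (mem_range.mp hi))]
        rw [Finset.sum_mul_sum, Finset.sum_mul]
        refine Finset.sum_congr rfl fun t _ => ?_
        rw [Finset.sum_mul]
        refine Finset.sum_congr rfl fun u _ => ?_
        ring
    _ = ∑ t ∈ Finset.range s, ∑ u ∈ Finset.range r, ∑ k ∈ Finset.range s, ∑ i ∈ Finset.range r,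
          ((if k ≤ t then δμ t else 0) * ((if i ≤ u then δν u else 0) * d k i)) :=
        sum_swap4 _ _ _
    _ = ∑ t ∈ Finset.range s, ∑ u ∈ Finset.range r,
          δμ t * δν u * (∑ k ∈ Finset.range (t+1), ∑ i ∈ Finset.range (u+1), d k i) := by
        refine Finset.sum_congr rfl fun t ht => Finset.sum_congr rfl fun u hu => ?_
        have hts := mem_range.mp ht
        have hur := mem_range.mp hu
        have inner : ∀ k, ∑ i ∈ Finset.range r, ((if i ≤ u then δν u else 0) * d k i)
            = δν u * ∑ i ∈ Finset.range (u+1), d k i := by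
          intro k
          rw [Finset.sum_congr rfl fun i (_ : i ∈ Finset.range r) =>
            (show (if i ≤ u then δν u else 0) * d k i = if i ≤ u then δν u * d k i else 0 by
              split <;> simp), sum_indicator_le r u hur, Finset.mul_sum]
        calc ∑ k ∈ Finset.range s, ∑ i ∈ Finset.range r,
              ((if k ≤ t then δμ t else 0) * ((if i ≤ u then δν u else 0) * d k i))
            = ∑ k ∈ Finset.range s,
                (if k ≤ t then δμ t * (δν u * ∑ i ∈ Finset.range (u+1), d k i) else 0) := by
              refine Finset.sum_congr rfl fun k _ => ?_
              rw [← Finset.mul_sum, inner k]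
              split <;> simp
          _ = ∑ k ∈ Finset.range (t+1), δμ t * (δν u * ∑ i ∈ Finset.range (u+1), d k i) :=
              sum_indicator_le s t hts _
          _ = δμ t * δν u * (∑ k ∈ Finset.range (t+1), ∑ i ∈ Finset.range (u+1), d k i) := by
              rw [Finset.mul_sum]
              exact Finset.sum_congr rfl fun k _ => by ring
    _ ≤ ∑ t ∈ Finset.range s, ∑ u ∈ Finset.range r, δμ t * δν u * ((min (t+1) (u+1) : ℕ) : ℝ) := by
        refine Finset.sum_le_sum fun t ht => Finset.sum_le_sum fun u hu => ?_
        refine mul_le_mul_of_nonneg_left ?_ (mul_nonneg (hδμ0 t (mem_range.mp ht)) (hδν0 u (mem_range.mp hu)))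
        have h1 : ∑ k ∈ Finset.range (t+1), ∑ i ∈ Finset.range (u+1), d k i ≤ ((t:ℝ)+1) := by
          calc ∑ k ∈ Finset.range (t+1), ∑ i ∈ Finset.range (u+1), d k i
              ≤ ∑ _k ∈ Finset.range (t+1), (1:ℝ) := by
                refine Finset.sum_le_sum fun k hk => ?_
                refine le_trans (Finset.sum_le_sum_of_subset_of_nonneg
                  (Finset.range_subset_range.mpr (mem_range.mp hu)) (fun i _ _ => hd0 k i)) ?_
                exact hrow k (lt_of_le_of_lt (Nat.lt_succ_iff.mp (mem_range.mp hk)) (mem_range.mp ht))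
            _ = ((t:ℝ)+1) := by simp
        have h2 : ∑ k ∈ Finset.range (t+1), ∑ i ∈ Finset.range (u+1), d k i ≤ ((u:ℝ)+1) := by
          rw [Finset.sum_comm]
          calc ∑ i ∈ Finset.range (u+1), ∑ k ∈ Finset.range (t+1), d k i
              ≤ ∑ _i ∈ Finset.range (u+1), (1:ℝ) := by
                refine Finset.sum_le_sum fun i hi => ?_
                refine le_trans (Finset.sum_le_sum_of_subset_of_nonneg
                  (Finset.range_subset_range.mpr (mem_range.mp ht)) (fun k _ _ => hd0 k i)) ?_
                exact hcol i (lt_of_le_of_lt (Nat.lt_succ_iff.mp (mem_range.mp hi)) (mem_range.mp hu))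
            _ = ((u:ℝ)+1) := by simp
        have hc : ((min (t+1) (u+1) : ℕ) : ℝ) = min ((t:ℝ)+1) ((u:ℝ)+1) := by push_cast; simp
        rw [hc]
        exact le_min h1 h2
    _ = ∑ i ∈ Finset.range r, μ i * ν i := by
        symm
        calc ∑ i ∈ Finset.range r, μ i * ν i
            = ∑ i ∈ Finset.range r, ∑ t ∈ Finset.range s, ∑ u ∈ Finset.range r,
                ((if i ≤ t then δμ t else 0) * (if i ≤ u then δν u else 0)) := by
              refine Finset.sum_congr rfl fun i hi => ?_
              rw [hμk i (le_of_lt (lt_of_lt_of_le (mem_range.mp hi) hrs)),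
                hνk i (le_of_lt (mem_range.mp hi)), Finset.sum_mul_sum]
          _ = ∑ t ∈ Finset.range s, ∑ u ∈ Finset.range r, ∑ i ∈ Finset.range r,
                ((if i ≤ t then δμ t else 0) * (if i ≤ u then δν u else 0)) :=
              sum_swap3 _ _ _ _
          _ = ∑ t ∈ Finset.range s, ∑ u ∈ Finset.range r, δμ t * δν u * ((min (t+1) (u+1) : ℕ) : ℝ) := by
              refine Finset.sum_congr rfl fun t ht => Finset.sum_congr rfl fun u hu => ?_
              have hur := mem_range.mp hu
              rw [Finset.sum_congr rfl fun i (_ : i ∈ Finset.range r) =>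
                (show (if i ≤ t then δμ t else 0) * (if i ≤ u then δν u else 0)
                    = if i ≤ min t u then δμ t * δν u else 0 by
                  by_cases h1 : i ≤ t <;> by_cases h2 : i ≤ u <;> simp [h1, h2, le_min_iff]),
                sum_indicator_le r (min t u) (lt_of_le_of_lt (min_le_right t u) hur),
                Finset.sum_const, Finset.card_range]
              have hmin : min (t+1) (u+1) = min t u + 1 := by omega
              rw [hmin, nsmul_eq_mul]
              push_cast [Nat.cast_min t u]
              ring

/-! ### Matrix entry lemmas -/

lemma svdH_mul_apply {m n p : ℕ} (s : ℕ) (hs : s ≤ m) (τ : ℕ → ℝ)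
    (Y : Matrix (Fin m) (Fin p) ℂ) (k : Fin n) (b : Fin p) :
    ((svdMat m n s τ)ᴴ * Y) k b
      = if h : (k:ℕ) < s then (τ ((k:ℕ)+1) : ℂ) * Y ⟨k, lt_of_lt_of_le h hs⟩ b else 0 := by
  rw [Matrix.mul_apply]
  split_ifs with h
  · rw [Finset.sum_eq_single (⟨(k:ℕ), lt_of_lt_of_le h hs⟩ : Fin m)]
    · simp [svdMat, Matrix.conjTranspose_apply, h, Complex.conj_ofReal]
    · intro a _ ha
      have : ¬((a:ℕ) = (k:ℕ) ∧ (a:ℕ) < s) := by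
        rintro ⟨h1, -⟩; exact ha (Fin.ext h1)
      simp [svdMat, Matrix.conjTranspose_apply, this]
    · simp
  · apply Finset.sum_eq_zero; intro a _
    have : ¬((a:ℕ) = (k:ℕ) ∧ (a:ℕ) < s) := by rintro ⟨h1, h2⟩; omega
    simp [svdMat, Matrix.conjTranspose_apply, this]

lemma svd_mul_apply {m n p : ℕ} (r : ℕ) (hrn : r ≤ n) (σ : ℕ → ℝ)
    (Q : Matrix (Fin n) (Fin p) ℂ) (b : Fin m) (j : Fin p) :
    (svdMat m n r σ * Q) b j
      = if h : (b:ℕ) < r then (σ ((b:ℕ)+1) : ℂ) * Q ⟨b, lt_of_lt_of_le h hrn⟩ j else 0 := by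
  rw [Matrix.mul_apply]
  split_ifs with h
  · rw [Finset.sum_eq_single (⟨(b:ℕ), lt_of_lt_of_le h hrn⟩ : Fin n)]
    · simp [svdMat, h]
    · intro c _ hc
      have : ¬((b:ℕ) = (c:ℕ) ∧ (b:ℕ) < r) := by
        rintro ⟨h1, -⟩; exact hc (Fin.ext h1.symm)
      simp [svdMat, this]
    · simp
  · apply Finset.sum_eq_zero; intro c _
    have : ¬((b:ℕ) = (c:ℕ) ∧ (b:ℕ) < r) := by rintro ⟨h1, h2⟩; omega
    simp [svdMat, this]

lemma sum_fin_restrict {n s : ℕ} (hs : s ≤ n) (f : Fin n → ℂ)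
    (hf : ∀ j : Fin n, ¬((j:ℕ) < s) → f j = 0) :
    ∑ j : Fin n, f j = ∑ j : Fin s, f (Fin.castLE hs j) := by
  classical
  rw [← Finset.sum_image (g := Fin.castLE hs) (f := f)
      (by intro x _ y _ hxy; exact Fin.castLE_injective hs hxy)]
  symm
  apply Finset.sum_subset (Finset.subset_univ _)
  intro j _ hj
  apply hf
  intro hlt
  exact hj (Finset.mem_image.mpr ⟨⟨(j:ℕ), hlt⟩, Finset.mem_univ _, Fin.ext rfl⟩)

lemma trace_svd_form {m n : ℕ} (s r : ℕ) (hsm : s ≤ m) (hsn : s ≤ n) (hrm : r ≤ m) (hrn : r ≤ n)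
    (τ σ : ℕ → ℝ) (P : Matrix (Fin m) (Fin m) ℂ) (Q : Matrix (Fin n) (Fin n) ℂ) :
    ((svdMat m n s τ)ᴴ * (P * (svdMat m n r σ * Q))).trace
      = ∑ k : Fin s, ∑ c : Fin r,
          ((τ ((k:ℕ)+1) * σ ((c:ℕ)+1) : ℝ) : ℂ) *
            (P (Fin.castLE hsm k) (Fin.castLE hrm c) * Q (Fin.castLE hrn c) (Fin.castLE hsn k)) := by
  have h1 : ∀ j : Fin n, ((svdMat m n s τ)ᴴ * (P * (svdMat m n r σ * Q))) j j
      = if h : (j:ℕ) < s then (τ ((j:ℕ)+1) : ℂ) * (P * (svdMat m n r σ * Q)) ⟨j, lt_of_lt_of_le h hsm⟩ j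
        else 0 := fun j => svdH_mul_apply s hsm τ _ j j
  rw [Matrix.trace]
  simp only [Matrix.diag]
  rw [Finset.sum_congr rfl fun j _ => h1 j]
  rw [sum_fin_restrict hsn _ (fun j hj => by rw [dif_neg hj])]
  refine Finset.sum_congr rfl fun k _ => ?_
  rw [dif_pos (by simpa using k.isLt)]
  have h2 : ∀ (a : Fin m) (j : Fin n), (P * (svdMat m n r σ * Q)) a j
      = ∑ b : Fin m, P a b * (if h : (b:ℕ) < r then (σ ((b:ℕ)+1) : ℂ) * Q ⟨b, lt_of_lt_of_le h hrn⟩ j else 0) := by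
    intro a j
    rw [Matrix.mul_apply]
    exact Finset.sum_congr rfl fun b _ => by rw [svd_mul_apply r hrn σ Q b j]
  rw [h2]
  rw [show (∑ b : Fin m, P ⟨(Fin.castLE hsn k : ℕ), lt_of_lt_of_le (by simpa using k.isLt) hsm⟩ b *
        (if h : (b:ℕ) < r then (σ ((b:ℕ)+1) : ℂ) * Q ⟨b, lt_of_lt_of_le h hrn⟩ (Fin.castLE hsn k) else 0))
      = ∑ c : Fin r, P (Fin.castLE hsm k) (Fin.castLE hrm c) *
          ((σ ((c:ℕ)+1) : ℂ) * Q (Fin.castLE hrn c) (Fin.castLE hsn k)) from ?_]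
  · rw [Finset.mul_sum]
    refine Finset.sum_congr rfl fun c _ => ?_
    simp only [Fin.coe_castLE]
    push_cast
    ring
  · rw [sum_fin_restrict hrm _ (fun b hb => by rw [dif_neg hb, mul_zero])]
    refine Finset.sum_congr rfl fun c _ => ?_
    rw [dif_pos (by simpa using c.isLt)]
    rfl

/-! ### svd algebra -/

lemma svd_herm (n s : ℕ) (τ : ℕ → ℝ) : (svdMat n n s τ)ᴴ = svdMat n n s τ := by
  ext i j
  simp only [Matrix.conjTranspose_apply, svdMat, Matrix.of_apply]
  by_cases h : (i:ℕ) = (j:ℕ) ∧ (i:ℕ) < s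
  · have h' : (j:ℕ) = (i:ℕ) ∧ (j:ℕ) < s := by omega
    rw [if_pos h', if_pos h, h'.1]
    exact Complex.conj_ofReal _
  · have h' : ¬((j:ℕ) = (i:ℕ) ∧ (j:ℕ) < s) := by omega
    rw [if_neg h', if_neg h]
    exact star_zero _

lemma svd_diag (n r : ℕ) (σ : ℕ → ℝ) :
    svdMat n n r σ = Matrix.diagonal
      (fun j : Fin n => if (j:ℕ) < r then ((σ ((j:ℕ)+1) : ℝ) : ℂ) else 0) := by
  ext i j
  simp only [svdMat, Matrix.of_apply, Matrix.diagonal_apply]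
  by_cases h : i = j
  · subst h; by_cases h2 : (i:ℕ) < r <;> simp [h2]
  · have h' : ¬((i:ℕ) = (j:ℕ)) := fun hc => h (Fin.ext hc)
    simp [h', h]

lemma svd_posSemidef (n r : ℕ) (σ : ℕ → ℝ) (hσ : ∀ j, j < r → 0 ≤ σ (j+1)) :
    (svdMat n n r σ).PosSemidef := by
  rw [svd_diag]
  refine Matrix.posSemidef_diagonal_iff.mpr fun j => ?_
  split_ifs with h
  · exact Complex.zero_le_real.mpr (hσ _ h)
  · exact le_refl 0

lemma svd_sq {m n r : ℕ} (hrm : r ≤ m) (hrn : r ≤ n) (σ : ℕ → ℝ) :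
    (svdMat m n r σ)ᴴ * svdMat m n r σ = svdMat n n r σ * svdMat n n r σ := by
  ext j j'
  rw [svdH_mul_apply r hrm σ (svdMat m n r σ) j j',
    svd_mul_apply r hrn σ (svdMat n n r σ) j j']
  split_ifs with h
  · congr 1
  · rfl

lemma trace_conj_unit {n : ℕ} (V : Matrix (Fin n) (Fin n) ℂ) (hV : Vᴴ * V = 1)
    (X : Matrix (Fin n) (Fin n) ℂ) : (V * X * Vᴴ).trace = X.trace := by
  rw [Matrix.trace_mul_comm (V * X) Vᴴ, ← Matrix.mul_assoc, hV, Matrix.one_mul]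

lemma sum_range_ite (n r : ℕ) (h : r ≤ n) (f : ℕ → ℂ) :
    ∑ j ∈ Finset.range n, (if j < r then f j else 0) = ∑ j ∈ Finset.range r, f j := by
  rw [Finset.sum_ite, Finset.sum_const_zero, add_zero]
  congr 1
  ext j; simp; omega

lemma svd_sq_trace (n r : ℕ) (hrn : r ≤ n) (σ : ℕ → ℝ) :
    (svdMat n n r σ * svdMat n n r σ).trace
      = ((∑ j ∈ Finset.range r, σ (j+1)^2 : ℝ) : ℂ) := by
  have h : ∀ j : Fin n, (svdMat n n r σ * svdMat n n r σ) j j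
      = if (j:ℕ) < r then ((σ ((j:ℕ)+1)^2 : ℝ) : ℂ) else 0 := by
    intro j
    rw [svd_mul_apply r hrn σ (svdMat n n r σ) j j]
    split_ifs with h
    · simp [svdMat, h, sq]
    · rfl
  rw [Matrix.trace]
  simp only [Matrix.diag]
  rw [Finset.sum_congr rfl fun j _ => h j]
  rw [Fin.sum_univ_eq_sum_range (fun j => if j < r then ((σ (j+1)^2 : ℝ) : ℂ) else 0) n]
  rw [sum_range_ite n r hrn]
  push_cast
  rfl

open scoped MatrixOrder in
lemma psd_sqrt_unique {n : ℕ} (M B : Matrix (Fin n) (Fin n) ℂ) (hM : M.PosSemidef)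
    (hB : B.PosSemidef) (h : B ^ 2 = M) :
    hM.1.eigenvectorUnitary.1 *
      Matrix.diagonal ((↑) ∘ (Real.sqrt ·) ∘ hM.1.eigenvalues) *
      (star hM.1.eigenvectorUnitary : Matrix (Fin n) (Fin n) ℂ) = B := by
  have e1 : CFC.sqrt M = B := CFC.sqrt_unique (by rw [← h, pow_two]) hB.nonneg
  rw [← e1, CFC.sqrt_eq_real_sqrt M hM.nonneg, cfcₙ_eq_cfc, hM.1.cfc_eq, Matrix.IsHermitian.cfc,
    Unitary.conjStarAlgAut_apply]
  rfl

lemma absMat_eq {m n r : ℕ} (hrm : r ≤ m) (hrn : r ≤ n)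
    (σ : ℕ → ℝ) (hσ : ∀ j, j < r → 0 ≤ σ (j+1))
    (U : Matrix (Fin m) (Fin m) ℂ) (V : Matrix (Fin n) (Fin n) ℂ)
    (hU : Uᴴ * U = 1) (hV : Vᴴ * V = 1)
    (A : Matrix (Fin m) (Fin n) ℂ) (hA : A = U * svdMat m n r σ * Vᴴ) :
    absMat A = V * svdMat n n r σ * Vᴴ := by
  have hB : (V * svdMat n n r σ * Vᴴ).PosSemidef :=
    (svd_posSemidef n r σ hσ).mul_mul_conjTranspose_same V
  have hsq : (V * svdMat n n r σ * Vᴴ) ^ 2 = Aᴴ * A := by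
    rw [pow_two, hA]
    simp only [Matrix.conjTranspose_mul, Matrix.conjTranspose_conjTranspose]
    simp only [Matrix.mul_assoc]
    rw [show Vᴴ * (V * (svdMat n n r σ * Vᴴ)) = svdMat n n r σ * Vᴴ by
      rw [← Matrix.mul_assoc, hV, Matrix.one_mul]]
    rw [show Uᴴ * (U * (svdMat m n r σ * Vᴴ)) = svdMat m n r σ * Vᴴ by
      rw [← Matrix.mul_assoc, hU, Matrix.one_mul]]
    rw [← Matrix.mul_assoc (svdMat n n r σ), ← Matrix.mul_assoc ((svdMat m n r σ)ᴴ),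
      svd_sq hrm hrn σ]
  exact psd_sqrt_unique _ _ (Matrix.posSemidef_conjTranspose_mul_self A) hB hsq

/-! ### frobenius and traces -/

lemma frob_sq_trace {m n : ℕ} (X : Matrix (Fin m) (Fin n) ℂ) :
    frob X ^ 2 = (Xᴴ * X).trace.re := by
  have h : (Xᴴ * X).trace.re = ∑ j : Fin n, ∑ i : Fin m, ‖X i j‖ ^ 2 := by
    rw [Matrix.trace]
    simp only [Matrix.diag, Matrix.mul_apply, Matrix.conjTranspose_apply]
    rw [Complex.re_sum]
    refine Finset.sum_congr rfl fun j _ => ?_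
    rw [Complex.re_sum]
    refine Finset.sum_congr rfl fun i _ => ?_
    rw [show star (X i j) * X i j = ((‖X i j‖^2 : ℝ) : ℂ) by
      rw [mul_comm, show star (X i j) = (starRingEnd ℂ) (X i j) from rfl, Complex.mul_conj]
      norm_cast
      simp [← Complex.sq_norm]]
    rw [Complex.ofReal_re]
  rw [frob, Real.sq_sqrt (by positivity), h, Finset.sum_comm]

lemma unitary_row_sq {m : ℕ} (P : Matrix (Fin m) (Fin m) ℂ) (h : P * Pᴴ = 1) (a : Fin m) :
    ∑ b : Fin m, ‖P a b‖^2 = 1 := by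
  have h1 : (P * Pᴴ) a a = 1 := by rw [h]; simp [Matrix.one_apply]
  rw [Matrix.mul_apply] at h1
  have h2 : (∑ b : Fin m, P a b * (Pᴴ) b a) = ((∑ b : Fin m, ‖P a b‖^2 : ℝ) : ℂ) := by
    push_cast
    refine Finset.sum_congr rfl fun b _ => ?_
    rw [Matrix.conjTranspose_apply, show star (P a b) = (starRingEnd ℂ) (P a b) from rfl,
      Complex.mul_conj]
    norm_cast
    simp [← Complex.sq_norm]
  rw [h2] at h1
  exact_mod_cast h1

lemma unitary_col_sq {m : ℕ} (P : Matrix (Fin m) (Fin m) ℂ) (h : Pᴴ * P = 1) (b : Fin m) :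
    ∑ a : Fin m, ‖P a b‖^2 = 1 := by
  have := unitary_row_sq Pᴴ (by rw [Matrix.conjTranspose_conjTranspose]; exact h) b
  rw [← this]
  refine Finset.sum_congr rfl fun a _ => ?_
  rw [Matrix.conjTranspose_apply]
  simp

lemma sum_cast_le {r m : ℕ} (h : r ≤ m) (g : Fin m → ℝ) (hg : ∀ b, 0 ≤ g b) :
    ∑ c : Fin r, g (Fin.castLE h c) ≤ ∑ b : Fin m, g b := by
  classical
  rw [← Finset.sum_image (g := Fin.castLE h) (f := g)
      (by intro x _ y _ hxy; exact Fin.castLE_injective h hxy)]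
  exact Finset.sum_le_sum_of_subset_of_nonneg (Finset.subset_univ _) (fun b _ _ => hg b)

lemma sum_Icc_range (r : ℕ) (f : ℕ → ℝ) :
    ∑ j ∈ Finset.Icc 1 r, f j = ∑ j ∈ Finset.range r, f (j+1) := by
  induction r with
  | zero => simp
  | succ k ih => rw [Finset.sum_Icc_succ_top (by omega), ih, Finset.sum_range_succ]

end StrongLee

open StrongLee Finset in
set_option maxHeartbeats 4000000 in
theorem strong_Lee_conjecture_lower
    (m n r s : ℕ) (hm : 0 < m) (hn : 0 < n) (hrs : r ≤ s) (hsmn : s ≤ min m n)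
    (A At : Matrix (Fin m) (Fin n) ℂ)
    (σ τ : ℕ → ℝ) (hσ : SingVals r σ) (hτ : SingVals s τ)
    (hA : HasSVD A r σ) (hAtilde : HasSVD At s τ)
    (hrankA : A.rank = r) (hrankAt : At.rank = s)
    (F G : ℝ)
    (hF : F = ∑ j ∈ Finset.Icc 1 r, σ j ^ 2 + ∑ j ∈ Finset.Icc 1 s, τ j ^ 2)
    (hG : G = ∑ j ∈ Finset.Icc 1 r, σ j * τ j) :
    frob (A + At) ≥
      Real.sqrt ((F - 2 * G) / (F + 2 * G)) *
        frob (absMat A + absMat At) := by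
  classical
  obtain ⟨U, V, hUU, hUUt, hVV, hVVt, hAe⟩ := hA
  obtain ⟨Ut, Vt, hUtU, hUtUt, hVtV, hVtVt, hAte⟩ := hAtilde
  have hsm : s ≤ m := hsmn.trans (min_le_left m n)
  have hsn : s ≤ n := hsmn.trans (min_le_right m n)
  have hrm : r ≤ m := hrs.trans hsm
  have hrn : r ≤ n := hrs.trans hsn
  have hσpos : ∀ j, j < r → 0 < σ (j+1) := fun j hj => hσ.1 (j+1) (by omega) (by omega)
  have hτpos : ∀ j, j < s → 0 < τ (j+1) := fun j hj => hτ.1 (j+1) (by omega) (by omega)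
  set P : Matrix (Fin m) (Fin m) ℂ := Utᴴ * U with hP
  set Q : Matrix (Fin n) (Fin n) ℂ := Vᴴ * Vt with hQ
  -- unitarity of P and Q
  have hPPt : P * Pᴴ = 1 := by
    rw [hP, Matrix.conjTranspose_mul, Matrix.conjTranspose_conjTranspose]
    calc Utᴴ * U * (Uᴴ * Ut) = Utᴴ * (U * Uᴴ) * Ut := by
          simp only [Matrix.mul_assoc]
      _ = 1 := by rw [hUUt, Matrix.mul_one, hUtU]
  have hPtP : Pᴴ * P = 1 := by
    rw [hP, Matrix.conjTranspose_mul, Matrix.conjTranspose_conjTranspose]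
    calc Uᴴ * Ut * (Utᴴ * U) = Uᴴ * (Ut * Utᴴ) * U := by
          simp only [Matrix.mul_assoc]
      _ = 1 := by rw [hUtUt, Matrix.mul_one, hUU]
  have hQQt : Q * Qᴴ = 1 := by
    rw [hQ, Matrix.conjTranspose_mul, Matrix.conjTranspose_conjTranspose]
    calc Vᴴ * Vt * (Vtᴴ * V) = Vᴴ * (Vt * Vtᴴ) * V := by
          simp only [Matrix.mul_assoc]
      _ = 1 := by rw [hVtVt, Matrix.mul_one, hVV]
  have hQtQ : Qᴴ * Q = 1 := by
    rw [hQ, Matrix.conjTranspose_mul, Matrix.conjTranspose_conjTranspose]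
    calc Vtᴴ * V * (Vᴴ * Vt) = Vtᴴ * (V * Vᴴ) * Vt := by
          simp only [Matrix.mul_assoc]
      _ = 1 := by rw [hVVt, Matrix.mul_one, hVtV]
  -- abs matrices
  have habs : absMat A = V * svdMat n n r σ * Vᴴ :=
    absMat_eq hrm hrn σ (fun j hj => (hσpos j hj).le) U V hUU hVV A hAe
  have habst : absMat At = Vt * svdMat n n s τ * Vtᴴ :=
    absMat_eq hsm hsn τ (fun j hj => (hτpos j hj).le) Ut Vt hUtU hVtV At hAte
  rw [habs, habst]
  set HA : Matrix (Fin n) (Fin n) ℂ := V * svdMat n n r σ * Vᴴ with hHA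
  set HAt : Matrix (Fin n) (Fin n) ℂ := Vt * svdMat n n s τ * Vtᴴ with hHAt
  -- real sums
  set Sσ : ℝ := ∑ j ∈ Finset.range r, σ (j+1)^2 with hSσ
  set Sτ : ℝ := ∑ j ∈ Finset.range s, τ (j+1)^2 with hSτ
  set GR : ℝ := ∑ j ∈ Finset.range r, σ (j+1) * τ (j+1) with hGR
  have hFR : F = Sσ + Sτ := by
    rw [hF, sum_Icc_range, sum_Icc_range]
  have hGRe : G = GR := by rw [hG, sum_Icc_range]
  -- traces of squares
  have trA : (Aᴴ * A).trace = ((Sσ : ℝ) : ℂ) := by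
    have h1 : Aᴴ * A = V * ((svdMat m n r σ)ᴴ * svdMat m n r σ) * Vᴴ := by
      rw [hAe]
      simp only [Matrix.conjTranspose_mul, Matrix.conjTranspose_conjTranspose, Matrix.mul_assoc]
      rw [show Uᴴ * (U * (svdMat m n r σ * Vᴴ)) = svdMat m n r σ * Vᴴ by
        rw [← Matrix.mul_assoc, hUU, Matrix.one_mul]]
    rw [h1, trace_conj_unit V hVV, svd_sq hrm hrn σ, svd_sq_trace n r hrn σ]
  have trAt : (Atᴴ * At).trace = ((Sτ : ℝ) : ℂ) := by
    have h1 : Atᴴ * At = Vt * ((svdMat m n s τ)ᴴ * svdMat m n s τ) * Vtᴴ := by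
      rw [hAte]
      simp only [Matrix.conjTranspose_mul, Matrix.conjTranspose_conjTranspose, Matrix.mul_assoc]
      rw [show Utᴴ * (Ut * (svdMat m n s τ * Vtᴴ)) = svdMat m n s τ * Vtᴴ by
        rw [← Matrix.mul_assoc, hUtU, Matrix.one_mul]]
    rw [h1, trace_conj_unit Vt hVtV, svd_sq hsm hsn τ, svd_sq_trace n s hsn τ]
  -- cross trace for A
  have trX : (Atᴴ * A).trace
      = ∑ k : Fin s, ∑ c : Fin r,
          ((τ ((k:ℕ)+1) * σ ((c:ℕ)+1) : ℝ) : ℂ) *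
            (P (Fin.castLE hsm k) (Fin.castLE hrm c) * Q (Fin.castLE hrn c) (Fin.castLE hsn k)) := by
    have h1 : (Atᴴ * A).trace = ((svdMat m n s τ)ᴴ * (P * (svdMat m n r σ * Q))).trace := by
      rw [hAe, hAte, hP, hQ]
      simp only [Matrix.conjTranspose_mul, Matrix.conjTranspose_conjTranspose, Matrix.mul_assoc]
      rw [Matrix.trace_mul_comm Vt]
      simp only [Matrix.mul_assoc]
    rw [h1]
    exact trace_svd_form s r hsm hsn hrm hrn τ σ P Q
  set T : ℝ := (Atᴴ * A).trace.re with hT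
  -- cross trace for abs
  have trH : (HAt * HA).trace
      = ∑ k : Fin s, ∑ c : Fin r,
          ((τ ((k:ℕ)+1) * σ ((c:ℕ)+1) : ℝ) : ℂ) *
            (Qᴴ (Fin.castLE hsn k) (Fin.castLE hrn c) * Q (Fin.castLE hrn c) (Fin.castLE hsn k)) := by
    have h1 : (HAt * HA).trace
        = ((svdMat n n s τ)ᴴ * (Qᴴ * (svdMat n n r σ * Q))).trace := by
      rw [hHA, hHAt, hQ, svd_herm n s τ]
      simp only [Matrix.conjTranspose_mul, Matrix.conjTranspose_conjTranspose, Matrix.mul_assoc]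
      rw [Matrix.trace_mul_comm Vt]
      simp only [Matrix.mul_assoc]
    rw [h1]
    exact trace_svd_form s r hsn hsn hrn hrn τ σ Qᴴ Q
  set SS : ℝ := (HAt * HA).trace.re with hSS
  -- frobenius expansions
  have hLsq : frob (A + At) ^ 2 = Sσ + Sτ + 2 * T := by
    rw [frob_sq_trace]
    have hexp : (A + At)ᴴ * (A + At) = Aᴴ * A + Aᴴ * At + (Atᴴ * A + Atᴴ * At) := by
      rw [Matrix.conjTranspose_add, Matrix.add_mul, Matrix.mul_add, Matrix.mul_add]
    rw [hexp]
    have hstar : (Aᴴ * At).trace = star ((Atᴴ * A).trace) := by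
      rw [← Matrix.trace_conjTranspose]
      congr 1
      simp [Matrix.conjTranspose_mul]
    simp only [Matrix.trace_add, Complex.add_re, trA, trAt, hstar]
    rw [show (star ((Atᴴ * A).trace)).re = ((Atᴴ * A).trace).re from Complex.conj_re _]
    simp only [Complex.ofReal_re, ← hT]
    ring
  have hHherm : HAᴴ = HA := by
    rw [hHA]
    simp only [Matrix.conjTranspose_mul, Matrix.conjTranspose_conjTranspose, svd_herm,
      Matrix.mul_assoc]
  have hHtherm : HAtᴴ = HAt := by
    rw [hHAt]
    simp only [Matrix.conjTranspose_mul, Matrix.conjTranspose_conjTranspose, svd_herm,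
      Matrix.mul_assoc]
  have trHA : (HA * HA).trace = ((Sσ : ℝ) : ℂ) := by
    have h1 : HA * HA = V * (svdMat n n r σ * svdMat n n r σ) * Vᴴ := by
      rw [hHA]
      simp only [Matrix.mul_assoc]
      rw [show Vᴴ * (V * (svdMat n n r σ * Vᴴ)) = svdMat n n r σ * Vᴴ by
        rw [← Matrix.mul_assoc, hVV, Matrix.one_mul]]
    rw [h1, trace_conj_unit V hVV, svd_sq_trace n r hrn σ]
  have trHAt : (HAt * HAt).trace = ((Sτ : ℝ) : ℂ) := by
    have h1 : HAt * HAt = Vt * (svdMat n n s τ * svdMat n n s τ) * Vtᴴ := by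
      rw [hHAt]
      simp only [Matrix.mul_assoc]
      rw [show Vtᴴ * (Vt * (svdMat n n s τ * Vtᴴ)) = svdMat n n s τ * Vtᴴ by
        rw [← Matrix.mul_assoc, hVtV, Matrix.one_mul]]
    rw [h1, trace_conj_unit Vt hVtV, svd_sq_trace n s hsn τ]
  have hRsq : frob (HA + HAt) ^ 2 = Sσ + Sτ + 2 * SS := by
    rw [frob_sq_trace]
    have hexp : (HA + HAt)ᴴ * (HA + HAt)
        = HA * HA + HA * HAt
          + (HAt * HA + HAt * HAt) := by
      rw [Matrix.conjTranspose_add, hHherm, hHtherm, Matrix.add_mul, Matrix.mul_add, Matrix.mul_add]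
    rw [hexp]
    have hstar : (HA * HAt).trace = star ((HAt * HA).trace) := by
      rw [← Matrix.trace_conjTranspose]
      congr 1
      rw [Matrix.conjTranspose_mul, hHherm, hHtherm]
    simp only [Matrix.trace_add, Complex.add_re, trHA, trHAt, hstar]
    rw [show (star ((HAt * HA).trace)).re = ((HAt * HA).trace).re
      from Complex.conj_re _]
    simp only [Complex.ofReal_re, ← hSS]
    ring
  -- the weight functions
  set μ : ℕ → ℝ := fun k => if k < s then τ (k+1) else 0 with hμ
  set ν : ℕ → ℝ := fun c => if c < r then σ (c+1) else 0 with hν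
  have hμs : μ s = 0 := by simp [hμ]
  have hνr : ν r = 0 := by simp [hν]
  have hμa : ∀ t, t < s → μ (t+1) ≤ μ t := by
    intro t ht
    simp only [hμ, if_pos ht]
    split_ifs with h2
    · exact hτ.2 (t+1) (by omega) h2
    · exact (hτpos t ht).le
  have hνa : ∀ t, t < r → ν (t+1) ≤ ν t := by
    intro t ht
    simp only [hν, if_pos ht]
    split_ifs with h2
    · exact hσ.2 (t+1) (by omega) h2
    · exact (hσpos t ht).le
  have hμν : ∑ i ∈ Finset.range r, μ i * ν i = GR := by
    rw [hGR]
    refine Finset.sum_congr rfl fun i hi => ?_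
    have hir := Finset.mem_range.mp hi
    simp only [hμ, hν, if_pos hir, if_pos (lt_of_lt_of_le hir hrs)]
    ring
  -- bound on T
  have hTbound : -GR ≤ T := by
    set d : ℕ → ℕ → ℝ := fun k c =>
      if h : k < s ∧ c < r then
        (‖P (Fin.castLE hsm ⟨k, h.1⟩) (Fin.castLE hrm ⟨c, h.2⟩)‖^2 +
         ‖Q (Fin.castLE hrn ⟨c, h.2⟩) (Fin.castLE hsn ⟨k, h.1⟩)‖^2) / 2
      else 0 with hd
    have hd0 : ∀ k c, 0 ≤ d k c := by
      intro k c; rw [hd]; dsimp only; split_ifs with h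
      · positivity
      · exact le_rfl
    have hrow : ∀ k, k < s → ∑ c ∈ Finset.range r, d k c ≤ 1 := by
      intro k hk
      rw [← Fin.sum_univ_eq_sum_range (fun c => d k c) r]
      have hdc : ∀ c : Fin r, d k (c:ℕ)
          = (‖P (Fin.castLE hsm ⟨k, hk⟩) (Fin.castLE hrm c)‖^2 +
             ‖Q (Fin.castLE hrn c) (Fin.castLE hsn ⟨k, hk⟩)‖^2) / 2 := by
        intro c
        rw [hd]; dsimp only
        rw [dif_pos ⟨hk, c.isLt⟩]
      rw [Finset.sum_congr rfl fun c _ => hdc c]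
      rw [← Finset.sum_div, Finset.sum_add_distrib]
      have h1 : ∑ c : Fin r, ‖P (Fin.castLE hsm ⟨k, hk⟩) (Fin.castLE hrm c)‖^2 ≤ 1 :=
        le_trans (sum_cast_le hrm (fun b => ‖P (Fin.castLE hsm ⟨k, hk⟩) b‖^2)
          (fun b => by positivity)) (le_of_eq (unitary_row_sq P hPPt _))
      have h2 : ∑ c : Fin r, ‖Q (Fin.castLE hrn c) (Fin.castLE hsn ⟨k, hk⟩)‖^2 ≤ 1 :=
        le_trans (sum_cast_le hrn (fun a => ‖Q a (Fin.castLE hsn ⟨k, hk⟩)‖^2)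
          (fun a => by positivity)) (le_of_eq (unitary_col_sq Q hQtQ _))
      linarith
    have hcol : ∀ c, c < r → ∑ k ∈ Finset.range s, d k c ≤ 1 := by
      intro c hc
      rw [← Fin.sum_univ_eq_sum_range (fun k => d k c) s]
      have hdc : ∀ k : Fin s, d (k:ℕ) c
          = (‖P (Fin.castLE hsm k) (Fin.castLE hrm ⟨c, hc⟩)‖^2 +
             ‖Q (Fin.castLE hrn ⟨c, hc⟩) (Fin.castLE hsn k)‖^2) / 2 := by
        intro k
        rw [hd]; dsimp only
        rw [dif_pos ⟨k.isLt, hc⟩]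
      rw [Finset.sum_congr rfl fun k _ => hdc k]
      rw [← Finset.sum_div, Finset.sum_add_distrib]
      have h1 : ∑ k : Fin s, ‖P (Fin.castLE hsm k) (Fin.castLE hrm ⟨c, hc⟩)‖^2 ≤ 1 :=
        le_trans (sum_cast_le hsm (fun a => ‖P a (Fin.castLE hrm ⟨c, hc⟩)‖^2)
          (fun a => by positivity)) (le_of_eq (unitary_col_sq P hPtP _))
      have h2 : ∑ k : Fin s, ‖Q (Fin.castLE hrn ⟨c, hc⟩) (Fin.castLE hsn k)‖^2 ≤ 1 :=
        le_trans (sum_cast_le hsn (fun b => ‖Q (Fin.castLE hrn ⟨c, hc⟩) b‖^2)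
          (fun b => by positivity)) (le_of_eq (unitary_row_sq Q hQQt _))
      linarith
    have hkey := key_rearrange r s hrs μ ν hμs hνr hμa hνa d hd0 hrow hcol
    rw [hμν] at hkey
    have hTge : -(∑ k ∈ Finset.range s, ∑ c ∈ Finset.range r, μ k * ν c * d k c) ≤ T := by
      have hconv : ∑ k ∈ Finset.range s, ∑ c ∈ Finset.range r, μ k * ν c * d k c
          = ∑ k : Fin s, ∑ c : Fin r, μ (k:ℕ) * ν (c:ℕ) * d (k:ℕ) (c:ℕ) := by
        rw [← Fin.sum_univ_eq_sum_range (fun k => ∑ c ∈ Finset.range r, μ k * ν c * d k c) s]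
        exact Finset.sum_congr rfl fun k _ =>
          (Fin.sum_univ_eq_sum_range (fun c => μ (k:ℕ) * ν c * d (k:ℕ) c) r).symm
      rw [hconv, hT, trX, Complex.re_sum, ← Finset.sum_neg_distrib]
      refine Finset.sum_le_sum fun k _ => ?_
      rw [Complex.re_sum, ← Finset.sum_neg_distrib]
      refine Finset.sum_le_sum fun c _ => ?_
      have hdval : d (k:ℕ) (c:ℕ)
          = (‖P (Fin.castLE hsm k) (Fin.castLE hrm c)‖^2 +
             ‖Q (Fin.castLE hrn c) (Fin.castLE hsn k)‖^2) / 2 := by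
        rw [hd]; dsimp only
        rw [dif_pos ⟨k.isLt, c.isLt⟩]
      have hμk : μ (k:ℕ) = τ ((k:ℕ)+1) := by simp [hμ, k.isLt]
      have hνc : ν (c:ℕ) = σ ((c:ℕ)+1) := by simp [hν, c.isLt]
      set p := P (Fin.castLE hsm k) (Fin.castLE hrm c) with hp
      set q := Q (Fin.castLE hrn c) (Fin.castLE hsn k) with hq
      have hre : -((‖p‖^2 + ‖q‖^2)/2) ≤ (p * q).re := by
        have h1 : |(p * q).re| ≤ ‖p * q‖ := by
          exact Complex.abs_re_le_norm (p * q)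
        have h2 : ‖p * q‖ = ‖p‖ * ‖q‖ := norm_mul p q
        nlinarith [sq_nonneg (‖p‖ - ‖q‖), neg_abs_le ((p*q).re), norm_nonneg p, norm_nonneg q]
      have hτσ : (0:ℝ) ≤ τ ((k:ℕ)+1) * σ ((c:ℕ)+1) :=
        mul_nonneg (hτpos _ k.isLt).le (hσpos _ c.isLt).le
      have hre2 : ((((τ ((k:ℕ)+1) * σ ((c:ℕ)+1) : ℝ)) : ℂ) * (p * q)).re
          = (τ ((k:ℕ)+1) * σ ((c:ℕ)+1)) * (p * q).re := by
        simp [Complex.mul_re, Complex.ofReal_re, Complex.ofReal_im]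
      rw [hdval, hμk, hνc, hre2]
      nlinarith [mul_le_mul_of_nonneg_left hre hτσ]
    linarith
  -- bound on SS
  have hSSbound : SS ≤ GR := by
    set d : ℕ → ℕ → ℝ := fun k c =>
      if h : k < s ∧ c < r then
        ‖Q (Fin.castLE hrn ⟨c, h.2⟩) (Fin.castLE hsn ⟨k, h.1⟩)‖^2
      else 0 with hd
    have hd0 : ∀ k c, 0 ≤ d k c := by
      intro k c; rw [hd]; dsimp only; split_ifs with h
      · positivity
      · exact le_rfl
    have hrow : ∀ k, k < s → ∑ c ∈ Finset.range r, d k c ≤ 1 := by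
      intro k hk
      rw [← Fin.sum_univ_eq_sum_range (fun c => d k c) r]
      have hdc : ∀ c : Fin r, d k (c:ℕ) = ‖Q (Fin.castLE hrn c) (Fin.castLE hsn ⟨k, hk⟩)‖^2 := by
        intro c; rw [hd]; dsimp only; rw [dif_pos ⟨hk, c.isLt⟩]
      rw [Finset.sum_congr rfl fun c _ => hdc c]
      exact le_trans (sum_cast_le hrn (fun a => ‖Q a (Fin.castLE hsn ⟨k, hk⟩)‖^2)
        (fun a => by positivity)) (le_of_eq (unitary_col_sq Q hQtQ _))
    have hcol : ∀ c, c < r → ∑ k ∈ Finset.range s, d k c ≤ 1 := by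
      intro c hc
      rw [← Fin.sum_univ_eq_sum_range (fun k => d k c) s]
      have hdc : ∀ k : Fin s, d (k:ℕ) c = ‖Q (Fin.castLE hrn ⟨c, hc⟩) (Fin.castLE hsn k)‖^2 := by
        intro k; rw [hd]; dsimp only; rw [dif_pos ⟨k.isLt, hc⟩]
      rw [Finset.sum_congr rfl fun k _ => hdc k]
      exact le_trans (sum_cast_le hsn (fun b => ‖Q (Fin.castLE hrn ⟨c, hc⟩) b‖^2)
        (fun b => by positivity)) (le_of_eq (unitary_row_sq Q hQQt _))
    have hkey := key_rearrange r s hrs μ ν hμs hνr hμa hνa d hd0 hrow hcol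
    rw [hμν] at hkey
    refine le_trans ?_ hkey
    have hconv : ∑ k ∈ Finset.range s, ∑ c ∈ Finset.range r, μ k * ν c * d k c
        = ∑ k : Fin s, ∑ c : Fin r, μ (k:ℕ) * ν (c:ℕ) * d (k:ℕ) (c:ℕ) := by
      rw [← Fin.sum_univ_eq_sum_range (fun k => ∑ c ∈ Finset.range r, μ k * ν c * d k c) s]
      exact Finset.sum_congr rfl fun k _ =>
        (Fin.sum_univ_eq_sum_range (fun c => μ (k:ℕ) * ν c * d (k:ℕ) c) r).symm
    rw [hconv, hSS, trH, Complex.re_sum]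
    refine le_of_eq (Finset.sum_congr rfl fun k _ => ?_)
    rw [Complex.re_sum]
    refine Finset.sum_congr rfl fun c _ => ?_
    have hdval : d (k:ℕ) (c:ℕ) = ‖Q (Fin.castLE hrn c) (Fin.castLE hsn k)‖^2 := by
      rw [hd]; dsimp only; rw [dif_pos ⟨k.isLt, c.isLt⟩]
    have hμk : μ (k:ℕ) = τ ((k:ℕ)+1) := by simp [hμ, k.isLt]
    have hνc : ν (c:ℕ) = σ ((c:ℕ)+1) := by simp [hν, c.isLt]
    set q := Q (Fin.castLE hrn c) (Fin.castLE hsn k) with hq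
    have hQH : Qᴴ (Fin.castLE hsn k) (Fin.castLE hrn c) = star q := by
      rw [Matrix.conjTranspose_apply]
    rw [hQH, show star q = (starRingEnd ℂ) q from rfl]
    rw [show (starRingEnd ℂ) q * q = ((‖q‖^2 : ℝ) : ℂ) by
      rw [mul_comm, Complex.mul_conj]
      norm_cast
      simp [← Complex.sq_norm]]
    rw [← Complex.ofReal_mul, Complex.ofReal_re, hdval, hμk, hνc]
  -- nonnegativity facts
  have hSσ0 : (0:ℝ) ≤ Sσ := Finset.sum_nonneg fun j _ => sq_nonneg _
  have hSτ0 : (0:ℝ) ≤ Sτ := Finset.sum_nonneg fun j _ => sq_nonneg _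
  have hGR0 : (0:ℝ) ≤ GR := Finset.sum_nonneg fun j hj =>
    mul_nonneg (hσpos j (Finset.mem_range.mp hj)).le
      (hτpos j (lt_of_lt_of_le (Finset.mem_range.mp hj) hrs)).le
  have hL0 : 0 ≤ frob (A + At) := Real.sqrt_nonneg _
  have hR0 : 0 ≤ frob (HA + HAt) := Real.sqrt_nonneg _
  -- final assembly
  rcases le_or_gt (F + 2 * G) 0 with hcase | hcase
  · have hFnn : 0 ≤ F := by rw [hFR]; linarith
    have hGnn : 0 ≤ G := by rw [hGRe]; exact hGR0
    have hFz : F = 0 := by linarith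
    have hGz : G = 0 := by linarith
    rw [hFz, hGz]
    rw [show ((0:ℝ) - 2*0)/(0+2*0) = 0 by norm_num, Real.sqrt_zero, zero_mul]
    exact hL0
  · rcases le_or_gt (F - 2 * G) 0 with hc2 | hc2
    · have hs0 : Real.sqrt ((F - 2*G)/(F+2*G)) = 0 :=
        Real.sqrt_eq_zero_of_nonpos (div_nonpos_iff.mpr (Or.inr ⟨hc2, hcase.le⟩))
      rw [hs0, zero_mul]
      exact hL0
    · have hratio0 : 0 ≤ (F - 2*G) / (F + 2*G) := div_nonneg hc2.le hcase.le
      have key : ((F - 2*G) / (F + 2*G)) * frob (HA + HAt) ^ 2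
          ≤ frob (A + At) ^ 2 := by
        rw [hRsq, hLsq]
        have h1 : Sσ + Sτ + 2 * SS ≤ F + 2*G := by
          rw [hFR, hGRe]; linarith
        have h2 : ((F - 2*G) / (F + 2*G)) * (Sσ + Sτ + 2 * SS)
            ≤ ((F - 2*G) / (F + 2*G)) * (F + 2*G) :=
          mul_le_mul_of_nonneg_left h1 hratio0
        have h3 : ((F - 2*G) / (F + 2*G)) * (F + 2*G) = F - 2*G := by
          field_simp
        have h4 : F - 2*G ≤ Sσ + Sτ + 2 * T := by
          rw [hFR, hGRe]; linarith
        linarith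
      calc Real.sqrt ((F - 2 * G) / (F + 2 * G)) * frob (HA + HAt)
          = Real.sqrt ((F - 2 * G) / (F + 2 * G)) * Real.sqrt (frob (HA + HAt) ^ 2) := by
            rw [Real.sqrt_sq hR0]
        _ = Real.sqrt (((F - 2 * G) / (F + 2 * G)) * frob (HA + HAt) ^ 2) := by
            rw [← Real.sqrt_mul hratio0]
        _ ≤ Real.sqrt (frob (A + At) ^ 2) := Real.sqrt_le_sqrt key
        _ = frob (A + At) := Real.sqrt_sq hL0
end

section
/- Let m, n be positive integers, let r ≤ s ≤ min(m,n), and let A be a nonzero complex m×n matrix of rank r with singular values σ_1 ≥ … ≥ σ_r > 0 and B a nonzero complex m×n matrix of rank s with singular values σ̂_1 ≥ … ≥ σ̂_s > 0. If r ≠ s, or r = s but σ_j ≠ σ̂_j for some j, then the strict inequality ‖A Bᴴ‖_F < (1/2) · ‖ |A|² + |B|² ‖_F holds, where |A|² = AᴴA and |B|² = BᴴB. -/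
open scoped BigOperators Matrix ComplexOrder

open Polynomial

/- ### Auxiliary lemmas -/

lemma charpoly_unitary_conj {n : ℕ} (M N : Matrix (Fin n) (Fin n) ℂ)
    (h1 : M * Mᴴ = 1) : (M * N * Mᴴ).charpoly = N.charpoly := by
  have h1' : (M.map (C : ℂ →+* ℂ[X])) * (Mᴴ.map C) = 1 := by
    rw [← Matrix.map_mul, h1, Matrix.map_one _ (map_zero _) (map_one _)]
  have key : Matrix.charmatrix (M * N * Mᴴ) =
      (M.map C) * Matrix.charmatrix N * (Mᴴ.map C) := by
    simp only [Matrix.charmatrix, Matrix.map_mul]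
    rw [Matrix.mul_sub, Matrix.sub_mul]
    congr 1
    have hc : ∀ (P : Matrix (Fin n) (Fin n) ℂ[X]),
        P * (Matrix.scalar (Fin n)) X = (Matrix.scalar (Fin n)) X * P := by
      intro P
      exact (Matrix.scalar_commute X (fun r' => Commute.all X r') P).symm
    rw [hc, mul_assoc, h1', mul_one]
    simp only [map_mul, RingHom.mapMatrix_apply]
  rw [Matrix.charpoly, key, Matrix.det_mul, Matrix.det_mul, Matrix.charpoly]
  have : (M.map (C : ℂ →+* ℂ[X])).det * (Mᴴ.map C).det = 1 := by
    rw [← Matrix.det_mul, h1', Matrix.det_one]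
  calc (M.map (C : ℂ →+* ℂ[X])).det * N.charmatrix.det * (Mᴴ.map C).det
      = (M.map C).det * (Mᴴ.map C).det * N.charmatrix.det := by ring
    _ = N.charmatrix.det := by rw [this, one_mul]

lemma charpoly_diag {n : ℕ} (d : Fin n → ℂ) :
    (Matrix.diagonal d).charpoly = ∏ i, (X - C (d i)) := by
  rw [Matrix.charpoly_of_upperTriangular _ (Matrix.blockTriangular_diagonal d)]
  simp [Matrix.diagonal_apply_eq]

lemma multiset_eq_of_diag_conj {n : ℕ} (d e : Fin n → ℂ)
    (V W : Matrix (Fin n) (Fin n) ℂ)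
    (hV1 : Vᴴ * V = 1) (hV2 : V * Vᴴ = 1) (hW2 : W * Wᴴ = 1)
    (h : V * Matrix.diagonal d * Vᴴ = W * Matrix.diagonal e * Wᴴ) :
    Multiset.map d Finset.univ.val = Multiset.map e Finset.univ.val := by
  have hM : (Vᴴ * W) * (Vᴴ * W)ᴴ = 1 := by
    simp only [Matrix.conjTranspose_mul, Matrix.conjTranspose_conjTranspose]
    calc Vᴴ * W * (Wᴴ * V) = Vᴴ * (W * Wᴴ) * V := by noncomm_ring
      _ = 1 := by rw [hW2, mul_one, hV1]
  have hconj : Matrix.diagonal d = (Vᴴ * W) * Matrix.diagonal e * (Vᴴ * W)ᴴ := by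
    calc Matrix.diagonal d = Vᴴ * (V * Matrix.diagonal d * Vᴴ) * V := by
          rw [show Vᴴ * (V * Matrix.diagonal d * Vᴴ) * V
              = (Vᴴ * V) * Matrix.diagonal d * (Vᴴ * V) by noncomm_ring, hV1]
          simp
      _ = Vᴴ * (W * Matrix.diagonal e * Wᴴ) * V := by rw [h]
      _ = (Vᴴ * W) * Matrix.diagonal e * (Vᴴ * W)ᴴ := by
          simp only [Matrix.conjTranspose_mul, Matrix.conjTranspose_conjTranspose]
          noncomm_ring
  have hcp : (Matrix.diagonal d).charpoly = (Matrix.diagonal e).charpoly := by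
    rw [hconj, charpoly_unitary_conj _ _ hM]
  rw [charpoly_diag, charpoly_diag] at hcp
  have hd : (∏ i, (X - C (d i))) = ((Multiset.map d Finset.univ.val).map
      (fun a => X - C a)).prod := by
    rw [Multiset.map_map]; rfl
  have he : (∏ i, (X - C (e i))) = ((Multiset.map e Finset.univ.val).map
      (fun a => X - C a)).prod := by
    rw [Multiset.map_map]; rfl
  have := congrArg Polynomial.roots hcp
  rwa [hd, he, Polynomial.roots_multiset_prod_X_sub_C,
    Polynomial.roots_multiset_prod_X_sub_C] at this

lemma svd_gram (m n r : ℕ) (σ : ℕ → ℝ) (hr : r ≤ m) :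
    (svdMat m n r σ)ᴴ * svdMat m n r σ =
      Matrix.diagonal (fun j : Fin n =>
        if (j : ℕ) < r then (((σ ((j : ℕ) + 1) : ℝ) : ℂ)) ^ 2 else 0) := by
  ext j k
  simp only [Matrix.mul_apply, Matrix.conjTranspose_apply, svdMat, Matrix.of_apply,
    Matrix.diagonal]
  by_cases hjr : (j : ℕ) < r
  · have hjm : (j : ℕ) < m := lt_of_lt_of_le hjr hr
    rw [Finset.sum_eq_single (⟨(j : ℕ), hjm⟩ : Fin m)]
    · simp only [hjr, and_true]
      by_cases hjk : (j : ℕ) = (k : ℕ)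
      · have : j = k := Fin.ext hjk
        simp [this, ← Complex.ofReal_pow, sq, hjk]
      · have : j ≠ k := fun h => hjk (congrArg Fin.val h)
        simp [hjk, this, Matrix.of_apply]
    · intro i _ hi
      have : (i : ℕ) ≠ (j : ℕ) := by
        intro h; exact hi (Fin.ext h)
      simp [this]
    · intro h; exact absurd (Finset.mem_univ _) h
  · have hz : ∀ i : Fin m, star (if (i : ℕ) = (j : ℕ) ∧ (i : ℕ) < r
        then ((σ ((i : ℕ) + 1) : ℝ) : ℂ) else 0) *
        (if (i : ℕ) = (k : ℕ) ∧ (i : ℕ) < r then ((σ ((i : ℕ) + 1) : ℝ) : ℂ) else 0) = 0 := by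
      intro i
      by_cases hij : (i : ℕ) = (j : ℕ) ∧ (i : ℕ) < r
      · exact absurd (hij.1 ▸ hij.2) hjr
      · simp [hij]
    rw [Finset.sum_congr rfl fun i _ => hz i]
    simp [hjr]

lemma antitone_eq_of_multiset {n : ℕ} {f g : Fin n → ℝ} (hf : Antitone f) (hg : Antitone g)
    (h : Multiset.map f Finset.univ.val = Multiset.map g Finset.univ.val) : f = g := by
  rw [Fin.univ_val_map, Fin.univ_val_map] at h
  have hperm : List.Perm (List.ofFn f) (List.ofFn g) := Multiset.coe_eq_coe.mp h
  have hsf : (List.ofFn f).Pairwise (fun a b : ℝ => b ≤ a) :=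
    List.pairwise_ofFn.mpr fun i j hij => (hf hij.le : f j ≤ f i)
  have hsg : (List.ofFn g).Pairwise (fun a b : ℝ => b ≤ a) :=
    List.pairwise_ofFn.mpr fun i j hij => (hg hij.le : g j ≤ g i)
  have : IsAntisymm ℝ (fun a b : ℝ => b ≤ a) := ⟨fun a b h1 h2 => le_antisymm h2 h1⟩
  exact List.ofFn_injective (List.Perm.eq_of_pairwise (fun a b _ _ h1 h2 => le_antisymm h2 h1) hsf hsg hperm)

lemma trace_gram {a b : ℕ} (X : Matrix (Fin a) (Fin b) ℂ) :
    Matrix.trace (Xᴴ * X) = ((∑ i, ∑ j, ‖X i j‖ ^ 2 : ℝ) : ℂ) := by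
  have h : ∀ (i : Fin a) (j : Fin b),
      star (X i j) * X i j = ((‖X i j‖ ^ 2 : ℝ) : ℂ) := by
    intro i j
    calc star (X i j) * X i j = X i j * (starRingEnd ℂ) (X i j) := by rw [mul_comm]; rfl
      _ = ((Complex.normSq (X i j) : ℝ) : ℂ) := Complex.mul_conj _
      _ = ((‖X i j‖ ^ 2 : ℝ) : ℂ) := by rw [← Complex.sq_norm]
  rw [Matrix.trace]
  simp only [Matrix.diag_apply, Matrix.mul_apply, Matrix.conjTranspose_apply, h]
  push_cast
  exact Finset.sum_comm

lemma key_ineq {m n : ℕ} (A B : Matrix (Fin m) (Fin n) ℂ) (hne : Aᴴ * A ≠ Bᴴ * B) :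
    Real.sqrt (∑ i, ∑ j, ‖(A * Bᴴ) i j‖ ^ 2) <
      (1 / 2) * Real.sqrt (∑ i, ∑ j, ‖(Aᴴ * A + Bᴴ * B) i j‖ ^ 2) := by
  set P := Aᴴ * A with hPdef
  set Q := Bᴴ * B with hQdef
  have hP : Pᴴ = P := by simp [hPdef, Matrix.conjTranspose_mul]
  have hQ : Qᴴ = Q := by simp [hQdef, Matrix.conjTranspose_mul]
  set SP : ℝ := ∑ i, ∑ j, ‖P i j‖ ^ 2 with hSPdef
  set SQ : ℝ := ∑ i, ∑ j, ‖Q i j‖ ^ 2 with hSQdef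
  set SC : ℝ := ∑ i, ∑ j, ‖(A * Bᴴ) i j‖ ^ 2 with hSCdef
  set SD : ℝ := ∑ i, ∑ j, ‖(P - Q) i j‖ ^ 2 with hSDdef
  set SS : ℝ := ∑ i, ∑ j, ‖(P + Q) i j‖ ^ 2 with hSSdef
  have hcross : Matrix.trace (P * Q) = (SC : ℂ) := by
    rw [← trace_gram (A * Bᴴ), Matrix.conjTranspose_mul, Matrix.conjTranspose_conjTranspose,
      hPdef, hQdef]
    calc (Aᴴ * A * (Bᴴ * B)).trace = ((Bᴴ * B) * (Aᴴ * A)).trace := Matrix.trace_mul_comm _ _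
      _ = (Bᴴ * (B * (Aᴴ * A))).trace := by rw [Matrix.mul_assoc]
      _ = ((B * (Aᴴ * A)) * Bᴴ).trace := (Matrix.trace_mul_comm _ _).symm
      _ = (B * Aᴴ * (A * Bᴴ)).trace := by
          rw [← Matrix.mul_assoc, ← Matrix.mul_assoc, Matrix.mul_assoc (B * Aᴴ)]
  have hcross' : Matrix.trace (Q * P) = (SC : ℂ) := by
    rw [Matrix.trace_mul_comm]; exact hcross
  have hSS : (SS : ℂ) = (SP : ℂ) + SQ + 2 * SC := by
    have e1 : (P + Q)ᴴ * (P + Q) = Pᴴ * P + Qᴴ * Q + (P * Q + Q * P) := by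
      rw [Matrix.conjTranspose_add, hP, hQ]; noncomm_ring
    have h2 := trace_gram (P + Q)
    rw [e1, Matrix.trace_add, Matrix.trace_add, trace_gram P, trace_gram Q,
      Matrix.trace_add, hcross, hcross'] at h2
    rw [← h2]; ring
  have hSD : (SD : ℂ) = (SP : ℂ) + SQ - 2 * SC := by
    have e1 : (P - Q)ᴴ * (P - Q) = Pᴴ * P + Qᴴ * Q - (P * Q + Q * P) := by
      rw [Matrix.conjTranspose_sub, hP, hQ]; noncomm_ring
    have h2 := trace_gram (P - Q)
    rw [e1, Matrix.trace_sub, Matrix.trace_add, trace_gram P, trace_gram Q,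
      Matrix.trace_add, hcross, hcross'] at h2
    rw [← h2]; ring
  have hSSr : SS = SP + SQ + 2 * SC := by exact_mod_cast hSS
  have hSDr : SD = SP + SQ - 2 * SC := by exact_mod_cast hSD
  have hSCnn : 0 ≤ SC :=
    Finset.sum_nonneg fun i _ => Finset.sum_nonneg fun j _ => sq_nonneg _
  have hSDpos : 0 < SD := by
    have hne' : P - Q ≠ 0 := sub_ne_zero.mpr hne
    obtain ⟨i, hi⟩ : ∃ i, (P - Q) i ≠ 0 := by
      by_contra hc; push_neg at hc
      exact hne' (funext hc)
    obtain ⟨j, hj⟩ : ∃ j, (P - Q) i j ≠ 0 := by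
      by_contra hc; push_neg at hc
      exact hi (funext hc)
    have hjpos : 0 < ‖(P - Q) i j‖ ^ 2 := by
      have : (0 : ℝ) < ‖(P - Q) i j‖ := norm_pos_iff.mpr hj
      positivity
    have hinner : 0 < ∑ k, ‖(P - Q) i k‖ ^ 2 :=
      Finset.sum_pos' (fun k _ => sq_nonneg _) ⟨j, Finset.mem_univ j, hjpos⟩
    exact Finset.sum_pos' (fun l _ => Finset.sum_nonneg fun k _ => sq_nonneg _)
      ⟨i, Finset.mem_univ i, hinner⟩
  have hSSpos : 0 < SS := by linarith
  have hrhs : 0 < (1 / 2) * Real.sqrt SS := mul_pos (by norm_num) (Real.sqrt_pos.mpr hSSpos)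
  rw [Real.sqrt_lt' hrhs, mul_pow, Real.sq_sqrt hSSpos.le]
  nlinarith

lemma singvals_mono {r : ℕ} {σ : ℕ → ℝ} (hσ : SingVals r σ) :
    ∀ a b, 1 ≤ a → a ≤ b → b ≤ r → σ b ≤ σ a := by
  intro a b ha hab
  induction b, hab using Nat.le_induction with
  | base => intro _; exact le_refl _
  | succ b hb ih =>
    intro hbr
    exact le_trans (hσ.2 b (le_trans ha hb) (by omega)) (ih (by omega))

lemma gram_eq_diag {m n r : ℕ} {A : Matrix (Fin m) (Fin n) ℂ} {σ : ℕ → ℝ}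
    (hA : HasSVD A r σ) (hrm : r ≤ m) :
    ∃ V : Matrix (Fin n) (Fin n) ℂ, Vᴴ * V = 1 ∧ V * Vᴴ = 1 ∧
      Aᴴ * A = V * Matrix.diagonal (fun j : Fin n =>
        if (j : ℕ) < r then (((σ ((j : ℕ) + 1) : ℝ) : ℂ)) ^ 2 else 0) * Vᴴ := by
  obtain ⟨U, V, hU1, hU2, hV1, hV2, hAeq⟩ := hA
  refine ⟨V, hV1, hV2, ?_⟩
  rw [← svd_gram m n r σ hrm, hAeq]
  simp only [Matrix.conjTranspose_mul, Matrix.conjTranspose_conjTranspose, Matrix.mul_assoc]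
  rw [← Matrix.mul_assoc Uᴴ U, hU1, Matrix.one_mul]

theorem strict_AM_GM
    (m n r s : ℕ) (hm : 0 < m) (hn : 0 < n) (hrs : r ≤ s) (hsmn : s ≤ min m n)
    (A B : Matrix (Fin m) (Fin n) ℂ) (hA0 : A ≠ 0) (hB0 : B ≠ 0)
    (σ σh : ℕ → ℝ) (hσ : SingVals r σ) (hσh : SingVals s σh)
    (hA : HasSVD A r σ) (hB : HasSVD B s σh)
    (hrankA : A.rank = r) (hrankB : B.rank = s)
    (hne : r ≠ s ∨ (r = s ∧ ∃ j, 1 ≤ j ∧ j ≤ r ∧ σ j ≠ σh j)) :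
    frob (A * Bᴴ) < (1 / 2) * frob (Aᴴ * A + Bᴴ * B) := by
  have hsm : s ≤ m := hsmn.trans (min_le_left _ _)
  have hsn : s ≤ n := hsmn.trans (min_le_right _ _)
  have hrm : r ≤ m := hrs.trans hsm
  have hrn : r ≤ n := hrs.trans hsn
  have hPQ : Aᴴ * A ≠ Bᴴ * B := by
    intro h
    -- ranks
    have hr : r = s := by
      have h1 : (Aᴴ * A).rank = r := by rw [Matrix.rank_conjTranspose_mul_self, hrankA]
      have h2 : (Bᴴ * B).rank = s := by rw [Matrix.rank_conjTranspose_mul_self, hrankB]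
      rw [h, h2] at h1; exact h1.symm
    rcases hne with hne | ⟨_, j, hj1, hjr, hnej⟩
    · exact hne hr
    · -- eigenvalue multisets
      obtain ⟨V, hV1, hV2, hPV⟩ := gram_eq_diag hA hrm
      obtain ⟨W, hW1, hW2, hQW⟩ := gram_eq_diag hB hsm
      have hmult := multiset_eq_of_diag_conj _ _ V W hV1 hV2 hW2 (by rw [← hPV, ← hQW, h])
      -- pass to real sequences
      set f : Fin n → ℝ := fun j => if (j : ℕ) < r then (σ ((j : ℕ) + 1)) ^ 2 else 0 with hfdef
      set g : Fin n → ℝ := fun j => if (j : ℕ) < s then (σh ((j : ℕ) + 1)) ^ 2 else 0 with hgdef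
      have hfC : (fun j : Fin n =>
          if (j : ℕ) < r then (((σ ((j : ℕ) + 1) : ℝ) : ℂ)) ^ 2 else 0) =
          fun j => ((f j : ℝ) : ℂ) := by
        funext j; by_cases hj : (j : ℕ) < r <;> simp [hfdef, hj]
      have hgC : (fun j : Fin n =>
          if (j : ℕ) < s then (((σh ((j : ℕ) + 1) : ℝ) : ℂ)) ^ 2 else 0) =
          fun j => ((g j : ℝ) : ℂ) := by
        funext j; by_cases hj : (j : ℕ) < s <;> simp [hgdef, hj]
      rw [hfC, hgC] at hmult
      have hmultR : Multiset.map f Finset.univ.val = Multiset.map g Finset.univ.val := by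
        apply Multiset.map_injective (Complex.ofReal_injective)
        rwa [Multiset.map_map, Multiset.map_map]
      -- antitonicity
      have hmono : ∀ (r' : ℕ) (τ : ℕ → ℝ), SingVals r' τ → r' ≤ n →
          Antitone (fun j : Fin n => if (j : ℕ) < r' then (τ ((j : ℕ) + 1)) ^ 2 else 0) := by
        intro r' τ hτ hr'n j k hjk
        by_cases hk : (k : ℕ) < r'
        · have hj : (j : ℕ) < r' := lt_of_le_of_lt hjk hk
          simp only [hk, hj, if_true]
          have h1 : 0 < τ ((k : ℕ) + 1) := hτ.1 _ (by omega) (by omega)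
          have h2 : τ ((k : ℕ) + 1) ≤ τ ((j : ℕ) + 1) :=
            singvals_mono hτ _ _ (by omega) (by omega) (by omega)
          nlinarith [hτ.1 ((j : ℕ) + 1) (by omega) (by omega)]
        · simp only [hk, if_false]
          by_cases hj : (j : ℕ) < r'
          · simp only [hj, if_true]; positivity
          · simp [hj]
      have hfg : f = g :=
        antitone_eq_of_multiset (hmono r σ hσ hrn) (hmono s σh hσh hsn) hmultR
      -- contradiction at index j
      have hjn : j - 1 < n := by omega
      have := congrFun hfg ⟨j - 1, hjn⟩
      simp only [hfdef, hgdef] at this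
      have hjr' : (j - 1 : ℕ) < r := by omega
      have hjs' : (j - 1 : ℕ) < s := by omega
      rw [if_pos hjr', if_pos hjs'] at this
      have hj' : j - 1 + 1 = j := by omega
      rw [hj'] at this
      have h1 : 0 < σ j := hσ.1 j hj1 hjr
      have h2 : 0 < σh j := hσh.1 j hj1 (by omega)
      exact hnej (by nlinarith)
  rw [frob, frob]
  exact key_ineq A B hPQ
end
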